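/- arXiv:2506.12865 — 2 statements merged into one kernel-verified Lean document; each statement's English description precedes it below -/
import Mathlib

section
/- In homology, the three classes [X̄⁺+X̄⁻], [Ω̄], [S̄₁] in H_2 = ker ∂₂ / im ∂₃ satisfy [X̄⁺+X̄⁻] + [Ω̄] + [S̄₁] = 0; equivalently, the chain X̄⁺+X̄⁻+Ω̄+S̄₁ lies in the image of ∂₃. -/
abbrev Ch (ι : Type) := ι → ZMod 2

/-- basis chain corresponding to a single cell -/
def ee {ι : Type} [DecidableEq ι] (i : ι) : Ch ι := Pi.single i 1

/-- the ℤ/2-linear boundary map determined by its values on cells -/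
def mkBd {ι κ : Type} [Fintype ι] (d : ι → Ch κ) : Ch ι →ₗ[ZMod 2] Ch κ where
  toFun f := ∑ i, f i • d i
  map_add' x y := by simp [add_smul, Finset.sum_add_distrib]
  map_smul' c x := by simp [Finset.smul_sum, smul_smul]

inductive Cells1
  | Yb1
  | Yb2
  | Ub1
  | Ub2
  | Zb
  | Thb
  | Nab
  deriving DecidableEq

instance : Fintype Cells1 :=
  Fintype.ofList [Cells1.Yb1, Cells1.Yb2, Cells1.Ub1, Cells1.Ub2, Cells1.Zb, Cells1.Thb, Cells1.Nab] (by intro x; cases x <;> decide)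

inductive Cells2
  | Y1
  | Y2
  | U1
  | U2
  | Z
  | Th
  | Lb123
  | Lb231
  | Lb312
  | Lb132
  | Lb213
  | Lb321
  | Mb1
  | Mb2
  | Mb3
  | Nb1
  | Nb2
  | Nb3
  | Pb1
  | Pb2
  | Sb1
  | Sb2
  | Xbp
  | Xbm
  | Vb1p
  | Vb2p
  | Vb1m
  | Vb2m
  | Omb
  deriving DecidableEq

instance : Fintype Cells2 :=
  Fintype.ofList [Cells2.Y1, Cells2.Y2, Cells2.U1, Cells2.U2, Cells2.Z, Cells2.Th, Cells2.Lb123, Cells2.Lb231, Cells2.Lb312, Cells2.Lb132, Cells2.Lb213, Cells2.Lb321, Cells2.Mb1, Cells2.Mb2, Cells2.Mb3, Cells2.Nb1, Cells2.Nb2, Cells2.Nb3, Cells2.Pb1, Cells2.Pb2, Cells2.Sb1, Cells2.Sb2, Cells2.Xbp, Cells2.Xbm, Cells2.Vb1p, Cells2.Vb2p, Cells2.Vb1m, Cells2.Vb2m, Cells2.Omb] (by intro x; cases x <;> decide)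

/-- boundary values on cells -/
def d2 : Cells2 → Ch Cells1
  | .Y1 => ee Cells1.Nab + ee Cells1.Yb1 + ee Cells1.Yb2
  | .Y2 => ee Cells1.Nab + ee Cells1.Yb2 + ee Cells1.Yb1
  | .U1 => ee Cells1.Nab + ee Cells1.Ub1 + ee Cells1.Ub2
  | .U2 => ee Cells1.Nab + ee Cells1.Ub2 + ee Cells1.Ub1
  | .Z => ee Cells1.Nab
  | .Th => 0
  | .Lb123 => ee Cells1.Ub1 + ee Cells1.Zb + ee Cells1.Yb2
  | .Lb231 => ee Cells1.Yb1 + ee Cells1.Ub2 + ee Cells1.Zb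
  | .Lb312 => ee Cells1.Zb + ee Cells1.Yb2 + ee Cells1.Ub2
  | .Lb132 => ee Cells1.Yb1 + ee Cells1.Zb + ee Cells1.Ub2
  | .Lb213 => ee Cells1.Ub1 + ee Cells1.Yb2 + ee Cells1.Zb
  | .Lb321 => ee Cells1.Zb + ee Cells1.Ub2 + ee Cells1.Yb2
  | .Mb1 => ee Cells1.Ub1 + ee Cells1.Yb1 + ee Cells1.Ub2
  | .Mb2 => ee Cells1.Ub1 + ee Cells1.Ub2 + ee Cells1.Yb1
  | .Mb3 => ee Cells1.Yb2
  | .Nb1 => ee Cells1.Yb1 + ee Cells1.Ub2 + ee Cells1.Yb2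
  | .Nb2 => ee Cells1.Yb1 + ee Cells1.Yb2 + ee Cells1.Ub2
  | .Nb3 => ee Cells1.Ub1
  | .Pb1 => 0
  | .Pb2 => 0
  | .Sb1 => 0
  | .Sb2 => 0
  | .Xbp => ee Cells1.Yb1 + ee Cells1.Yb2
  | .Xbm => ee Cells1.Yb1 + ee Cells1.Yb2
  | .Vb1p => ee Cells1.Yb1 + ee Cells1.Ub1
  | .Vb2p => ee Cells1.Yb2 + ee Cells1.Ub2
  | .Vb1m => ee Cells1.Yb1 + ee Cells1.Ub1
  | .Vb2m => ee Cells1.Yb2 + ee Cells1.Ub2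
  | .Omb => 0

/-- the boundary operator -/
def bd2 : Ch Cells2 →ₗ[ZMod 2] Ch Cells1 := mkBd d2

inductive Cells3
  | L123
  | L231
  | L312
  | L132
  | L213
  | L321
  | M1
  | M2
  | M3
  | N1
  | N2
  | N3
  | P1
  | P2
  | S1
  | S2
  | Xp
  | Xm
  | V1p
  | V2p
  | V1m
  | V2m
  | Om
  | Fb1
  | Fb2
  | Fb3
  | Fb4
  | Gb1234
  | Gb1243
  | Gb1324
  | Gb1342
  | Gb1423
  | Gb1432
  | Gb2134
  | Gb2143
  | Gb2341
  | Gb2431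
  | Gb3142
  | Gb3241
  | Hb1
  | Hb2
  | Hb3
  | Hb4
  | Ib1
  | Ib2
  | Ib3
  | Jb123p
  | Jb123m
  | Jb132p
  | Jb132m
  | Jb213p
  | Jb213m
  | Jb231p
  | Jb231m
  | Jb312p
  | Jb312m
  | Jb321p
  | Jb321m
  | Kb1p
  | Kb1m
  | Kb2p
  | Kb2m
  | Kb3p
  | Kb3m
  | Wb1p
  | Wb1m
  | Wb2p
  | Wb2m
  deriving DecidableEq

instance : Fintype Cells3 :=
  Fintype.ofList [Cells3.L123, Cells3.L231, Cells3.L312, Cells3.L132, Cells3.L213, Cells3.L321, Cells3.M1, Cells3.M2, Cells3.M3, Cells3.N1, Cells3.N2, Cells3.N3, Cells3.P1, Cells3.P2, Cells3.S1, Cells3.S2, Cells3.Xp, Cells3.Xm, Cells3.V1p, Cells3.V2p, Cells3.V1m, Cells3.V2m, Cells3.Om, Cells3.Fb1, Cells3.Fb2, Cells3.Fb3, Cells3.Fb4, Cells3.Gb1234, Cells3.Gb1243, Cells3.Gb1324, Cells3.Gb1342, Cells3.Gb1423, Cells3.Gb1432, Cells3.Gb2134, Cells3.Gb2143, Cells3.Gb2341,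 Cells3.Gb2431, Cells3.Gb3142, Cells3.Gb3241, Cells3.Hb1, Cells3.Hb2, Cells3.Hb3, Cells3.Hb4, Cells3.Ib1, Cells3.Ib2, Cells3.Ib3, Cells3.Jb123p, Cells3.Jb123m, Cells3.Jb132p, Cells3.Jb132m, Cells3.Jb213p, Cells3.Jb213m, Cells3.Jb231p, Cells3.Jb231m, Cells3.Jb312p, Cells3.Jb312m, Cells3.Jb321p, Cells3.Jb321m, Cells3.Kb1p, Cells3.Kb1m, Cells3.Kb2p, Cells3.Kb2m, Cells3.Kb3p, Cells3.Kb3m, Cells3.Wb1p, Cells3.Wb1m, Cells3.Wb2p, Cells3.Wb2m] (by intro x; cases x <;> decide)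

/-- boundary values on cells -/
def d3 : Cells3 → Ch Cells2
  | .L123 => ee Cells2.U1 + ee Cells2.Z + ee Cells2.Lb123 + ee Cells2.Lb312
  | .L231 => ee Cells2.Y1 + ee Cells2.U2 + ee Cells2.Lb231 + ee Cells2.Lb123
  | .L312 => ee Cells2.Z + ee Cells2.Y2 + ee Cells2.Lb312 + ee Cells2.Lb231
  | .L132 => ee Cells2.Y1 + ee Cells2.Z + ee Cells2.Lb132 + ee Cells2.Lb321
  | .L213 => ee Cells2.U1 + ee Cells2.Y2 + ee Cells2.Lb213 + ee Cells2.Lb132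
  | .L321 => ee Cells2.Z + ee Cells2.U2 + ee Cells2.Lb321 + ee Cells2.Lb213
  | .M1 => ee Cells2.U1 + ee Cells2.Y1 + ee Cells2.Mb1 + ee Cells2.Mb3
  | .M2 => ee Cells2.U1 + ee Cells2.U2 + ee Cells2.Mb2 + ee Cells2.Mb1
  | .M3 => ee Cells2.Y2 + ee Cells2.U2 + ee Cells2.Mb3 + ee Cells2.Mb2
  | .N1 => ee Cells2.Y1 + ee Cells2.U2 + ee Cells2.Nb1 + ee Cells2.Nb3
  | .N2 => ee Cells2.Y1 + ee Cells2.Y2 + ee Cells2.Nb2 + ee Cells2.Nb1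
  | .N3 => ee Cells2.U1 + ee Cells2.Y2 + ee Cells2.Nb3 + ee Cells2.Nb2
  | .P1 => ee Cells2.Th + ee Cells2.Pb1 + ee Cells2.Pb2
  | .P2 => ee Cells2.Th + ee Cells2.Pb2 + ee Cells2.Pb1
  | .S1 => ee Cells2.Th + ee Cells2.Sb1 + ee Cells2.Sb2
  | .S2 => ee Cells2.Th + ee Cells2.Sb2 + ee Cells2.Sb1
  | .Xp => ee Cells2.Y1 + ee Cells2.Y2 + ee Cells2.Th
  | .Xm => ee Cells2.Y1 + ee Cells2.Y2
  | .V1p => ee Cells2.Y1 + ee Cells2.U1 + ee Cells2.Vb1p + ee Cells2.Vb2p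
  | .V2p => ee Cells2.Y2 + ee Cells2.U2 + ee Cells2.Vb2p + ee Cells2.Vb1p
  | .V1m => ee Cells2.Y1 + ee Cells2.U1 + ee Cells2.Th + ee Cells2.Vb1m + ee Cells2.Vb2m
  | .V2m => ee Cells2.Y2 + ee Cells2.U2 + ee Cells2.Th + ee Cells2.Vb2m + ee Cells2.Vb1m
  | .Om => 0
  | .Fb1 => ee Cells2.Mb1 + ee Cells2.Lb123 + ee Cells2.Lb132 + ee Cells2.Mb3
  | .Fb2 => ee Cells2.Mb1 + ee Cells2.Mb2 + ee Cells2.Lb231 + ee Cells2.Lb132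
  | .Fb3 => ee Cells2.Lb213 + ee Cells2.Mb2 + ee Cells2.Mb3 + ee Cells2.Lb231
  | .Fb4 => ee Cells2.Lb312 + ee Cells2.Lb321
  | .Gb1234 => ee Cells2.Lb123 + ee Cells2.Nb3 + ee Cells2.Lb312 + ee Cells2.Nb1 + ee Cells2.Xbm
  | .Gb1243 => ee Cells2.Lb132 + ee Cells2.Nb2 + ee Cells2.Lb312 + ee Cells2.Mb3 + ee Cells2.Vb2p
  | .Gb1324 => ee Cells2.Mb1 + ee Cells2.Vb1m + ee Cells2.Sb1 + ee Cells2.Nb2 + ee Cells2.Xbm + ee Cells2.Omb + ee Cells2.Sb2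
  | .Gb1342 => ee Cells2.Nb2 + ee Cells2.Xbm + ee Cells2.Mb3 + ee Cells2.Vb2m + ee Cells2.Omb
  | .Gb1423 => ee Cells2.Mb1 + ee Cells2.Lb213 + ee Cells2.Nb3 + ee Cells2.Vb1p + ee Cells2.Lb312
  | .Gb1432 => ee Cells2.Nb3 + ee Cells2.Lb213 + ee Cells2.Nb2 + ee Cells2.Xbm + ee Cells2.Lb321
  | .Gb2134 => ee Cells2.Lb123 + ee Cells2.Mb2 + ee Cells2.Lb321 + ee Cells2.Nb3 + ee Cells2.Vb1p
  | .Gb2143 => ee Cells2.Lb132 + ee Cells2.Nb1 + ee Cells2.Lb321 + ee Cells2.Nb2 + ee Cells2.Xbm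
  | .Gb2341 => ee Cells2.Nb2 + ee Cells2.Lb231 + ee Cells2.Nb1 + ee Cells2.Xbm + ee Cells2.Lb312
  | .Gb2431 => ee Cells2.Mb2 + ee Cells2.Nb1 + ee Cells2.Xbm + ee Cells2.Sb1 + ee Cells2.Omb + ee Cells2.Vb1m + ee Cells2.Sb2
  | .Gb3142 => ee Cells2.Mb3 + ee Cells2.Vb2m + ee Cells2.Nb1 + ee Cells2.Xbm + ee Cells2.Omb
  | .Gb3241 => ee Cells2.Nb1 + ee Cells2.Lb231 + ee Cells2.Mb3 + ee Cells2.Vb2p + ee Cells2.Lb321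
  | .Hb1 => ee Cells2.Mb1 + ee Cells2.Nb3 + ee Cells2.Nb2 + ee Cells2.Mb3
  | .Hb2 => ee Cells2.Mb1 + ee Cells2.Mb2 + ee Cells2.Nb1 + ee Cells2.Nb2
  | .Hb3 => ee Cells2.Nb3 + ee Cells2.Mb2 + ee Cells2.Mb3 + ee Cells2.Nb1
  | .Hb4 => ee Cells2.Nb2 + ee Cells2.Nb1
  | .Ib1 => ee Cells2.Sb1 + ee Cells2.Pb1 + ee Cells2.Sb2
  | .Ib2 => ee Cells2.Sb1 + ee Cells2.Sb2 + ee Cells2.Pb1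
  | .Ib3 => ee Cells2.Pb2
  | .Jb123p => ee Cells2.Xbm + ee Cells2.Mb1 + ee Cells2.Nb3 + ee Cells2.Vb2p
  | .Jb123m => ee Cells2.Sb1 + ee Cells2.Xbp + ee Cells2.Mb1 + ee Cells2.Nb3 + ee Cells2.Vb2m
  | .Jb132p => ee Cells2.Vb1m + ee Cells2.Xbp + ee Cells2.Mb1 + ee Cells2.Nb2 + ee Cells2.Sb2
  | .Jb132m => ee Cells2.Vb1p + ee Cells2.Xbm + ee Cells2.Mb1 + ee Cells2.Nb2
  | .Jb213p => ee Cells2.Sb1 + ee Cells2.Vb2m + ee Cells2.Mb2 + ee Cells2.Nb3 + ee Cells2.Xbp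
  | .Jb213m => ee Cells2.Vb2p + ee Cells2.Mb2 + ee Cells2.Nb3 + ee Cells2.Xbm
  | .Jb231p => ee Cells2.Vb1p + ee Cells2.Mb2 + ee Cells2.Nb1 + ee Cells2.Xbm
  | .Jb231m => ee Cells2.Vb1m + ee Cells2.Sb2 + ee Cells2.Mb2 + ee Cells2.Nb1 + ee Cells2.Xbp
  | .Jb312p => ee Cells2.Xbm + ee Cells2.Vb2p + ee Cells2.Mb3 + ee Cells2.Nb2
  | .Jb312m => ee Cells2.Xbp + ee Cells2.Vb2m + ee Cells2.Mb3 + ee Cells2.Nb2 + ee Cells2.Sb2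
  | .Jb321p => ee Cells2.Xbp + ee Cells2.Mb3 + ee Cells2.Nb1 + ee Cells2.Sb2 + ee Cells2.Vb2m
  | .Jb321m => ee Cells2.Xbm + ee Cells2.Mb3 + ee Cells2.Nb1 + ee Cells2.Vb2p
  | .Kb1p => ee Cells2.Vb1p + ee Cells2.Nb3 + ee Cells2.Nb2 + ee Cells2.Vb2p
  | .Kb1m => ee Cells2.Vb1m + ee Cells2.Pb2 + ee Cells2.Nb3 + ee Cells2.Nb2 + ee Cells2.Vb2m
  | .Kb2p => ee Cells2.Vb1p + ee Cells2.Vb2p + ee Cells2.Nb1 + ee Cells2.Nb3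
  | .Kb2m => ee Cells2.Vb1m + ee Cells2.Vb2m + ee Cells2.Nb1 + ee Cells2.Nb3 + ee Cells2.Pb2
  | .Kb3p => ee Cells2.Nb1 + ee Cells2.Nb2
  | .Kb3m => ee Cells2.Pb1 + ee Cells2.Nb1 + ee Cells2.Nb2
  | .Wb1p => ee Cells2.Pb1 + ee Cells2.Vb1p + ee Cells2.Vb1m + ee Cells2.Omb
  | .Wb1m => ee Cells2.Pb1 + ee Cells2.Vb1p + ee Cells2.Vb1m + ee Cells2.Omb
  | .Wb2p => ee Cells2.Pb2 + ee Cells2.Vb2p + ee Cells2.Vb2m + ee Cells2.Omb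
  | .Wb2m => ee Cells2.Pb2 + ee Cells2.Vb2p + ee Cells2.Vb2m + ee Cells2.Omb

/-- the boundary operator -/
def bd3 : Ch Cells3 →ₗ[ZMod 2] Ch Cells2 := mkBd d3


lemma bd3_ee (i : Cells3) : bd3 (ee i) = d3 i := by
  simp [bd3, mkBd, ee, Pi.single_apply]

set_option maxRecDepth 10000 in
lemma witness_eq : d3 Cells3.L123 + d3 Cells3.L231 + d3 Cells3.L312 + d3 Cells3.N1 +
    d3 Cells3.N2 + d3 Cells3.S1 + d3 Cells3.V1m + d3 Cells3.Gb1324 + d3 Cells3.Jb123m =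
    ee Cells2.Xbp + ee Cells2.Xbm + ee Cells2.Omb + ee Cells2.Sb1 := by
  decide

/-- [X̄⁺+X̄⁻] + [Ω̄] + [S̄₁] = 0 in H₂ = ker ∂₂ / im ∂₃; equivalently the chain
X̄⁺+X̄⁻+Ω̄+S̄₁ lies in the image of ∂₃. -/
theorem sum_of_three_classes_zero :
    (ee Cells2.Xbp + ee Cells2.Xbm + ee Cells2.Omb + ee Cells2.Sb1) ∈
      LinearMap.range bd3 := by
  refine ⟨ee Cells3.L123 + ee Cells3.L231 + ee Cells3.L312 + ee Cells3.N1 +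
    ee Cells3.N2 + ee Cells3.S1 + ee Cells3.V1m + ee Cells3.Gb1324 + ee Cells3.Jb123m, ?_⟩
  simp only [map_add, bd3_ee]
  exact witness_eq
end

section
/- For the ℤ/2 cellular chain complex with boundary maps ∂₆: C_6 → C_5 and ∂₅: C_5 → C_4 as specified in the paper, one has ∂₅ ∘ ∂₆ = 0. -/
inductive Cells4
  | F1
  | F2
  | F3
  | F4
  | G1234
  | G1243
  | G1324
  | G1342
  | G1423
  | G1432
  | G2134
  | G2143
  | G2341
  | G2431
  | G3142
  | G3241
  | H1
  | H2
  | H3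
  | H4
  | I1
  | I2
  | I3
  | J123p
  | J123m
  | J132p
  | J132m
  | J213p
  | J213m
  | J231p
  | J231m
  | J312p
  | J312m
  | J321p
  | J321m
  | K1p
  | K1m
  | K2p
  | K2m
  | K3p
  | K3m
  | W1p
  | W1m
  | W2p
  | W2m
  | Bb
  | Cb12
  | Cb13
  | Cb14
  | Cb15
  | Cb21
  | Cb23
  | Cb24
  | Cb25
  | Cb31
  | Cb32
  | Cb34
  | Cb35
  | Cb41
  | Cb42
  | Cb43
  | Cb45
  | Cb51
  | Cb52
  | Cb53
  | Cb54
  | Db12p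
  | Db12m
  | Db13p
  | Db13m
  | Db14p
  | Db14m
  | Db23p
  | Db23m
  | Db24p
  | Db24m
  | Db34p
  | Db34m
  | Ebp
  | Eb1
  | Eb2
  | Eb3
  deriving DecidableEq

instance : Fintype Cells4 := Fintype.ofList [.F1, .F2, .F3, .F4, .G1234, .G1243, .G1324, .G1342, .G1423, .G1432, .G2134, .G2143, .G2341, .G2431, .G3142, .G3241, .H1, .H2, .H3, .H4, .I1, .I2, .I3, .J123p, .J123m, .J132p, .J132m, .J213p, .J213m, .J231p, .J231m, .J312p, .J312m, .J321p, .J321m, .K1p, .K1m, .K2p, .K2m, .K3p, .K3m, .W1p, .W1m, .W2p, .W2m, .Bb, .Cb12, .Cb13, .Cb14, .Cb15, .Cb21, .Cb23, .Cb24, .Cb25, .Cb31, .Cb32, .Cb34, .Cb35, .Cb41, .Cb42, .Cb43, .Cb45, .Cb51, .Cb52, .Cb53, .Cb54, .Db12p, .Db12m, .Db13p, .Db13m, .Db14p, .Db14m, .Db23p, .Db23m, .Db24p, .Db24m, .Db34p, .Db34m, .Ebp, .Eb1, .Eb2, .Eb3] (by intro x; cases x <;> decide)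

inductive Cells5
  | B
  | C12
  | C13
  | C14
  | C15
  | C21
  | C23
  | C24
  | C25
  | C31
  | C32
  | C34
  | C35
  | C41
  | C42
  | C43
  | C45
  | C51
  | C52
  | C53
  | C54
  | D12p
  | D12m
  | D13p
  | D13m
  | D14p
  | D14m
  | D23p
  | D23m
  | D24p
  | D24m
  | D34p
  | D34m
  | Ep
  | E1
  | E2
  | E3
  | Ab23
  | Ab24
  | Ab25
  | Ab26
  | Ab34
  | Ab35
  | Ab36
  | Ab45
  | Ab46
  | Ab56
  deriving DecidableEq

instance : Fintype Cells5 := Fintype.ofList [.B, .C12, .C13, .C14, .C15, .C21, .C23, .C24, .C25, .C31, .C32, .C34, .C35, .C41, .C42, .C43, .C45, .C51, .C52, .C53, .C54, .D12p, .D12m, .D13p, .D13m, .D14p, .D14m, .D23p, .D23m, .D24p, .D24m, .D34p, .D34m, .Ep, .E1, .E2, .E3, .Ab23, .Ab24, .Ab25, .Ab26, .Ab34, .Ab35, .Ab36, .Ab45, .Ab46, .Ab56] (by intro x; cases x <;> decide)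

/-- boundary values on cells -/
def d5 : Cells5 → Ch Cells4
  | .B => ee Cells4.H1 + ee Cells4.H2 + ee Cells4.H3 + ee Cells4.H4
  | .C12 => ee Cells4.F1 + ee Cells4.H1 + ee Cells4.G1234 + ee Cells4.G1243 + ee Cells4.Cb12 + ee Cells4.Cb51
  | .C13 => ee Cells4.H1 + ee Cells4.J123p + ee Cells4.G1342 + ee Cells4.Cb13 + ee Cells4.Cb52
  | .C14 => ee Cells4.H1 + ee Cells4.G1324 + ee Cells4.J123m + ee Cells4.J132p + ee Cells4.Cb14 + ee Cells4.Cb53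
  | .C15 => ee Cells4.G1423 + ee Cells4.G1432 + ee Cells4.J132m + ee Cells4.Cb15 + ee Cells4.Cb54
  | .C21 => ee Cells4.F1 + ee Cells4.H2 + ee Cells4.G2134 + ee Cells4.G2143 + ee Cells4.Cb21 + ee Cells4.Cb15
  | .C23 => ee Cells4.H1 + ee Cells4.F2 + ee Cells4.H2 + ee Cells4.G2341 + ee Cells4.J123p + ee Cells4.Cb23 + ee Cells4.Cb12
  | .C24 => ee Cells4.H1 + ee Cells4.H2 + ee Cells4.J123m + ee Cells4.J132p + ee Cells4.J231p + ee Cells4.I1 + ee Cells4.W1p + ee Cells4.Cb24 + ee Cells4.Cb13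
  | .C25 => ee Cells4.H1 + ee Cells4.G2431 + ee Cells4.J132m + ee Cells4.J231m + ee Cells4.I1 + ee Cells4.W1m + ee Cells4.Cb25 + ee Cells4.Cb14
  | .C31 => ee Cells4.H3 + ee Cells4.G3142 + ee Cells4.J213p + ee Cells4.I2 + ee Cells4.Cb31 + ee Cells4.Cb25
  | .C32 => ee Cells4.H2 + ee Cells4.F2 + ee Cells4.H3 + ee Cells4.G3241 + ee Cells4.J213m + ee Cells4.Cb32 + ee Cells4.Cb21
  | .C34 => ee Cells4.G1423 + ee Cells4.H2 + ee Cells4.F3 + ee Cells4.H3 + ee Cells4.J231p + ee Cells4.Cb34 + ee Cells4.Cb23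
  | .C35 => ee Cells4.G1324 + ee Cells4.H2 + ee Cells4.I2 + ee Cells4.J231m + ee Cells4.Cb35 + ee Cells4.Cb24
  | .C41 => ee Cells4.G2431 + ee Cells4.H4 + ee Cells4.J213p + ee Cells4.J312p + ee Cells4.I3 + ee Cells4.W2p + ee Cells4.Cb41 + ee Cells4.Cb35
  | .C42 => ee Cells4.H3 + ee Cells4.H4 + ee Cells4.J213m + ee Cells4.J312m + ee Cells4.J321p + ee Cells4.I3 + ee Cells4.W2m + ee Cells4.Cb42 + ee Cells4.Cb31
  | .C43 => ee Cells4.G1432 + ee Cells4.H3 + ee Cells4.F3 + ee Cells4.H4 + ee Cells4.J321m + ee Cells4.Cb43 + ee Cells4.Cb32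
  | .C45 => ee Cells4.G1234 + ee Cells4.G2134 + ee Cells4.H3 + ee Cells4.F4 + ee Cells4.Cb45 + ee Cells4.Cb34
  | .C51 => ee Cells4.G2341 + ee Cells4.G3241 + ee Cells4.J312p + ee Cells4.Cb51 + ee Cells4.Cb45
  | .C52 => ee Cells4.H4 + ee Cells4.G3142 + ee Cells4.J312m + ee Cells4.J321p + ee Cells4.Cb52 + ee Cells4.Cb41
  | .C53 => ee Cells4.G1342 + ee Cells4.H4 + ee Cells4.J321m + ee Cells4.Cb53 + ee Cells4.Cb42
  | .C54 => ee Cells4.G1243 + ee Cells4.G2143 + ee Cells4.H4 + ee Cells4.F4 + ee Cells4.Cb54 + ee Cells4.Cb43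
  | .D12p => ee Cells4.J213m + ee Cells4.K3p + ee Cells4.H1 + ee Cells4.H2 + ee Cells4.Db12p + ee Cells4.Db14p
  | .D12m => ee Cells4.I1 + ee Cells4.J213p + ee Cells4.K3m + ee Cells4.H1 + ee Cells4.H2 + ee Cells4.Db12m + ee Cells4.Db14m
  | .D13p => ee Cells4.J123m + ee Cells4.J213p + ee Cells4.J312m + ee Cells4.H1 + ee Cells4.H3 + ee Cells4.Db13p + ee Cells4.Db24p
  | .D13m => ee Cells4.J123p + ee Cells4.J213m + ee Cells4.J312p + ee Cells4.H1 + ee Cells4.H3 + ee Cells4.Db13m + ee Cells4.Db24m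
  | .D14p => ee Cells4.J132m + ee Cells4.K2p + ee Cells4.J312p + ee Cells4.H1 + ee Cells4.H4 + ee Cells4.Db14p + ee Cells4.Db34p
  | .D14m => ee Cells4.J132p + ee Cells4.K2m + ee Cells4.J312m + ee Cells4.H1 + ee Cells4.H4 + ee Cells4.Db14m + ee Cells4.Db34m
  | .D23p => ee Cells4.J123p + ee Cells4.J321m + ee Cells4.H2 + ee Cells4.H3 + ee Cells4.Db23p + ee Cells4.Db12p
  | .D23m => ee Cells4.J123m + ee Cells4.I2 + ee Cells4.J321p + ee Cells4.H2 + ee Cells4.H3 + ee Cells4.Db23m + ee Cells4.Db12m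
  | .D24p => ee Cells4.J132p + ee Cells4.J231m + ee Cells4.J321p + ee Cells4.H2 + ee Cells4.H4 + ee Cells4.Db24p + ee Cells4.Db13p
  | .D24m => ee Cells4.J132m + ee Cells4.J231p + ee Cells4.J321m + ee Cells4.H2 + ee Cells4.H4 + ee Cells4.Db24m + ee Cells4.Db13m
  | .D34p => ee Cells4.K1p + ee Cells4.J231p + ee Cells4.H3 + ee Cells4.H4 + ee Cells4.Db34p + ee Cells4.Db23p
  | .D34m => ee Cells4.K1m + ee Cells4.J231m + ee Cells4.H3 + ee Cells4.H4 + ee Cells4.I3 + ee Cells4.Db34m + ee Cells4.Db23m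
  | .Ep => ee Cells4.K1p + ee Cells4.K2p + ee Cells4.K3p
  | .E1 => ee Cells4.K1p + ee Cells4.K2m + ee Cells4.K3m + ee Cells4.W1p + ee Cells4.Eb1 + ee Cells4.Eb3
  | .E2 => ee Cells4.K1m + ee Cells4.K2p + ee Cells4.K3m + ee Cells4.W1m + ee Cells4.W2p + ee Cells4.Eb2 + ee Cells4.Eb1
  | .E3 => ee Cells4.K1m + ee Cells4.K2m + ee Cells4.K3p + ee Cells4.W2m + ee Cells4.Eb3 + ee Cells4.Eb2
  | .Ab23 => ee Cells4.Cb12 + ee Cells4.Cb21 + ee Cells4.Cb45 + ee Cells4.Cb54 + ee Cells4.Db24m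
  | .Ab24 => ee Cells4.Cb13 + ee Cells4.Cb53 + ee Cells4.Db23p + ee Cells4.Db14m + ee Cells4.Db24p + ee Cells4.Db34m + ee Cells4.Eb3
  | .Ab25 => ee Cells4.Cb14 + ee Cells4.Cb35 + ee Cells4.Db23m + ee Cells4.Db24p + ee Cells4.Db14m + ee Cells4.Db34p + ee Cells4.Eb1
  | .Ab26 => ee Cells4.Cb15 + ee Cells4.Cb34 + ee Cells4.Cb43 + ee Cells4.Db24m + ee Cells4.Cb51
  | .Ab34 => ee Cells4.Cb31 + ee Cells4.Cb52 + ee Cells4.Db13p + ee Cells4.Db14p + ee Cells4.Db23m + ee Cells4.Db34m + ee Cells4.Eb2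
  | .Ab35 => ee Cells4.Db12p + ee Cells4.Db13m + ee Cells4.Db23p
  | .Ab36 => ee Cells4.Cb42 + ee Cells4.Db12p + ee Cells4.Db14m + ee Cells4.Db24p + ee Cells4.Db34m + ee Cells4.Eb3 + ee Cells4.Cb52
  | .Ab45 => ee Cells4.Cb25 + ee Cells4.Cb41 + ee Cells4.Db12m + ee Cells4.Db14p + ee Cells4.Db34m + ee Cells4.Eb2 + ee Cells4.Db24p
  | .Ab46 => ee Cells4.Cb24 + ee Cells4.Db12m + ee Cells4.Db13p + ee Cells4.Db14m + ee Cells4.Db34p + ee Cells4.Eb1 + ee Cells4.Cb53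
  | .Ab56 => ee Cells4.Cb23 + ee Cells4.Cb32 + ee Cells4.Cb51 + ee Cells4.Db13m + ee Cells4.Cb54

/-- the boundary operator -/
def bd5 : Ch Cells5 →ₗ[ZMod 2] Ch Cells4 := mkBd d5

inductive Cells6
  | A23
  | A24
  | A25
  | A26
  | A34
  | A35
  | A36
  | A45
  | A46
  | A56
  deriving DecidableEq

instance : Fintype Cells6 := Fintype.ofList [.A23, .A24, .A25, .A26, .A34, .A35, .A36, .A45, .A46, .A56] (by intro x; cases x <;> decide)

/-- boundary values on cells -/
def d6 : Cells6 → Ch Cells5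
  | .A23 => ee Cells5.C12 + ee Cells5.C21 + ee Cells5.B + ee Cells5.C45 + ee Cells5.C54 + ee Cells5.Ab23 + ee Cells5.Ab26
  | .A24 => ee Cells5.C13 + ee Cells5.B + ee Cells5.C53 + ee Cells5.D23p + ee Cells5.Ab24 + ee Cells5.Ab36
  | .A25 => ee Cells5.C14 + ee Cells5.B + ee Cells5.C35 + ee Cells5.D23m + ee Cells5.D24p + ee Cells5.Ab25 + ee Cells5.Ab46
  | .A26 => ee Cells5.C15 + ee Cells5.C34 + ee Cells5.C43 + ee Cells5.D24m + ee Cells5.Ab26 + ee Cells5.Ab56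
  | .A34 => ee Cells5.B + ee Cells5.C31 + ee Cells5.C52 + ee Cells5.D13p + ee Cells5.D23m + ee Cells5.Ab34 + ee Cells5.Ab45
  | .A35 => ee Cells5.B + ee Cells5.D12p + ee Cells5.D13m + ee Cells5.D14p + ee Cells5.D23p + ee Cells5.D24m + ee Cells5.D34p + ee Cells5.Ep
  | .A36 => ee Cells5.C42 + ee Cells5.D12p + ee Cells5.D14m + ee Cells5.D24p + ee Cells5.D34m + ee Cells5.E3 + ee Cells5.Ab36 + ee Cells5.Ab34
  | .A45 => ee Cells5.B + ee Cells5.C25 + ee Cells5.C41 + ee Cells5.D12m + ee Cells5.D14p + ee Cells5.D34m + ee Cells5.E2 + ee Cells5.Ab45 + ee Cells5.Ab25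
  | .A46 => ee Cells5.C24 + ee Cells5.D12m + ee Cells5.D13p + ee Cells5.D14m + ee Cells5.D34p + ee Cells5.E1 + ee Cells5.Ab46 + ee Cells5.Ab24
  | .A56 => ee Cells5.C23 + ee Cells5.C32 + ee Cells5.C51 + ee Cells5.D13m + ee Cells5.Ab56 + ee Cells5.Ab23

/-- the boundary operator -/
def bd6 : Ch Cells6 →ₗ[ZMod 2] Ch Cells5 := mkBd d6


lemma mkBd_ee {ι κ : Type} [Fintype ι] [DecidableEq ι] (d : ι → Ch κ) (i : ι) :
    mkBd d (ee i) = d i := by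
  show (∑ k, ee i k • d k) = d i
  rw [Finset.sum_eq_single i]
  · simp [ee]
  · intro b _ hb; simp [ee, Pi.single_apply, Ne.symm hb]
  · intro h; exact absurd (Finset.mem_univ i) h

set_option maxRecDepth 8000 in
set_option maxHeartbeats 4000000 in
/-- ∂₅ ∘ ∂₆ = 0 for the mod 2 cellular chain complex of `\overline{TD}_2(S¹)`. -/
theorem bd5_comp_bd6 : bd5 ∘ₗ bd6 = 0 := by
  apply Module.Basis.ext (Pi.basisFun (ZMod 2) Cells6)
  intro i
  simp only [Pi.basisFun_apply, LinearMap.comp_apply, LinearMap.zero_apply]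
  show bd5 (bd6 (ee i)) = 0
  rw [bd6, mkBd_ee]
  cases i <;>
    · rw [d6]
      simp only [map_add, bd5, mkBd_ee]
      decide
end
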